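/- Cheeger inequality: assume Assumption (β), let Ω ⊆ V be nonempty and suppose M_Ω = sup{ β⁺(x)/m(x) : x ∈ Ω } < ∞. Then h(Ω)²/8 ≤ M_Ω · ν(Δ^D_Ω) ≤ (1/2) M_Ω · h(Ω). -/

import Mathlib

open Function Complex

noncomputable def betaPlus {V : Type*} (b : V → V → ℝ) (x : V) : ℝ := ∑ᶠ y, b x y
noncomputable def betaMinus {V : Type*} (b : V → V → ℝ) (x : V) : ℝ := ∑ᶠ y, b y x

/-- The Laplacian `Δf(x) = (1/m(x)) Σ_y b(x,y)(f(x) - f(y))`; the normalized Laplacian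
`Δ̃` is the case `m = β⁺`. -/
noncomputable def lap {V : Type*} (b : V → V → ℝ) (m : V → ℝ) (f : V → ℂ) (x : V) : ℂ :=
  (1 / (m x : ℂ)) * ∑ᶠ y, (b x y : ℂ) * (f x - f y)

/-- The weighted inner product `(f,g)_w = Σ_x w(x) f(x) conj(g(x))`. -/
noncomputable def innerW {V : Type*} (w : V → ℝ) (f g : V → ℂ) : ℂ :=
  ∑ᶠ x, (w x : ℂ) * f x * (starRingEnd ℂ) (g x)

/-- The total edge-boundary weight of a finite set `U`:
`b(∂_E U) = Σ_{x∈U, y∉U} b(x,y) + Σ_{x∉U, y∈U} b(x,y)`. -/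
noncomputable def bdryWeight {V : Type*} [DecidableEq V] (b : V → V → ℝ) (U : Finset V) :
    ℝ :=
  ∑ x ∈ U, ∑ᶠ y, (if y ∈ U then 0 else b x y + b y x)

/-- The Cheeger constant of `Ω ⊆ V` with respect to the weight `w`:
`h(Ω) = inf { b(∂_E U) / w(U) : U ⊆ Ω finite nonempty }`. -/
noncomputable def cheeger {V : Type*} [DecidableEq V] (b : V → V → ℝ) (w : V → ℝ)
    (Ω : Set V) : ℝ :=
  sInf {r : ℝ | ∃ U : Finset V, U.Nonempty ∧ ↑U ⊆ Ω ∧ r = bdryWeight b U / ∑ x ∈ U, w x}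

/-- The bottom of the real part of the numerical range of the Dirichlet Laplacian on `Ω`:
`ν(Δ^D_Ω) = inf { Re (Δf, f)_m : f finitely supported, supp f ⊆ Ω, ‖f‖_m = 1 }`. -/
noncomputable def nuD {V : Type*} (b : V → V → ℝ) (m : V → ℝ) (Ω : Set V) : ℝ :=
  sInf {r : ℝ | ∃ f : V → ℂ, (support f).Finite ∧ support f ⊆ Ω ∧
    innerW m f f = 1 ∧ r = (innerW m (lap b m f) f).re}

section cheegerAux
variable {V : Type*} [DecidableEq V]

lemma finsum_to_sum' {V M : Type*} [AddCommMonoid M] (f : V → M) (s : Finset V)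
    (h : ∀ x, f x ≠ 0 → x ∈ s) : ∑ᶠ x, f x = ∑ x ∈ s, f x :=
  finsum_eq_sum_of_support_subset f (fun x hx => h x hx)

lemma norm_sq_sub (z w : ℂ) :
    ‖z - w‖^2 = ((z - w) * (starRingEnd ℂ) z).re + ((w - z) * (starRingEnd ℂ) w).re := by
  have : ((z-w) * (starRingEnd ℂ) z).re + ((w - z) * (starRingEnd ℂ) w).re
      = ((z-w) * (starRingEnd ℂ) (z - w)).re := by
    simp only [map_sub]; ring_nf
    simp only [← Complex.add_re, ← Complex.sub_re]; ring_nf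
  rw [this, Complex.mul_conj, Complex.ofReal_re, Complex.normSq_eq_norm_sq]

lemma green' {V : Type*} [DecidableEq V] (b : V → V → ℝ) (m : V → ℝ) (f : V → ℂ) (T : Finset V)
    (hm : ∀ x, m x ≠ 0)
    (hnbr : ∀ x, f x ≠ 0 → ∀ y, (b x y ≠ 0 ∨ b y x ≠ 0) → y ∈ T)
    (hβT : ∀ x, f x ≠ 0 → (∑ y ∈ T, b x y) = ∑ y ∈ T, b y x)
    (hsupp : ∀ x, f x ≠ 0 → x ∈ T) :
    (innerW m (lap b m f) f).re
      = (1/2) * ∑ x ∈ T, ∑ y ∈ T, b x y * ‖f x - f y‖ ^ 2 := by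
  have hA : innerW m (lap b m f) f
      = ∑ x ∈ T, ∑ y ∈ T, (b x y : ℂ) * ((f x - f y) * (starRingEnd ℂ) (f x)) := by
    rw [innerW, finsum_to_sum' _ T (by
      intro x hx
      by_cases hfx : f x = 0
      · simp [hfx] at hx
      · exact hsupp x hfx)]
    refine Finset.sum_congr rfl fun x hx => ?_
    by_cases hfx : f x = 0
    · simp [hfx]
    · rw [lap, finsum_to_sum' (fun y => (b x y:ℂ) * (f x - f y)) T (by
        intro y hy
        refine hnbr x hfx y (Or.inl ?_)
        intro hb; simp [hb] at hy)]
      have hmx : (m x : ℂ) ≠ 0 := Complex.ofReal_ne_zero.mpr (hm x)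
      have hstep : (m x : ℂ) * (1/(m x:ℂ) * ∑ y ∈ T, (b x y:ℂ)*(f x - f y)) * (starRingEnd ℂ) (f x)
          = (∑ y ∈ T, (b x y:ℂ)*(f x - f y)) * (starRingEnd ℂ) (f x) := by
        field_simp
      rw [hstep, Finset.sum_mul]
      exact Finset.sum_congr rfl fun y hy => by ring
  have hre : (innerW m (lap b m f) f).re
      = ∑ x ∈ T, ∑ y ∈ T, b x y * ((f x - f y) * (starRingEnd ℂ) (f x)).re := by
    rw [hA, Complex.re_sum]
    refine Finset.sum_congr rfl fun x hx => ?_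
    rw [Complex.re_sum]
    exact Finset.sum_congr rfl fun y hy => re_ofReal_mul _ _
  rw [hre]
  -- abbreviations
  set r : V → V → ℝ := fun x y => ((f x - f y) * (starRingEnd ℂ) (f x)).re with hrdef
  have hsplit : ∑ x ∈ T, ∑ y ∈ T, b x y * ‖f x - f y‖ ^ 2
      = (∑ x ∈ T, ∑ y ∈ T, b x y * r x y) + ∑ x ∈ T, ∑ y ∈ T, b y x * r x y := by
    have h2 : ∑ x ∈ T, ∑ y ∈ T, b x y * r y x = ∑ x ∈ T, ∑ y ∈ T, b y x * r x y := by
      rw [Finset.sum_comm]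
    rw [← h2, ← Finset.sum_add_distrib]
    refine Finset.sum_congr rfl fun x hx => ?_
    rw [← Finset.sum_add_distrib]
    refine Finset.sum_congr rfl fun y hy => ?_
    rw [hrdef]; simp only []
    rw [norm_sq_sub (f x) (f y)]; ring
  -- the symmetrization: ∑∑ b y x * r x y = ∑∑ b x y * r x y
  have hsym : ∑ x ∈ T, ∑ y ∈ T, b y x * r x y = ∑ x ∈ T, ∑ y ∈ T, b x y * r x y := by
    have hrexp : ∀ x y, r x y = (f x * (starRingEnd ℂ) (f x)).re
        - (f y * (starRingEnd ℂ) (f x)).re := by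
      intro x y; rw [hrdef]; simp only []
      rw [sub_mul, Complex.sub_re]
    have hssymm : ∀ x y, (f y * (starRingEnd ℂ) (f x)).re
        = (f x * (starRingEnd ℂ) (f y)).re := by
      intro x y
      rw [← Complex.conj_re (f y * (starRingEnd ℂ) (f x))]
      simp [mul_comm]
    have e1 : ∑ x ∈ T, ∑ y ∈ T, (b y x - b x y) * (f x * (starRingEnd ℂ) (f x)).re = 0 := by
      refine Finset.sum_eq_zero fun x hx => ?_
      by_cases hfx : f x = 0
      · simp [hfx]
      · rw [← Finset.sum_mul]
        rw [Finset.sum_sub_distrib, ← hβT x hfx, sub_self, zero_mul]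
    have e2 : ∑ x ∈ T, ∑ y ∈ T, (b y x - b x y) * (f y * (starRingEnd ℂ) (f x)).re = 0 := by
      set S := ∑ x ∈ T, ∑ y ∈ T, (b y x - b x y) * (f y * (starRingEnd ℂ) (f x)).re with hS
      have : S = -S := by
        nth_rewrite 1 [hS]
        rw [Finset.sum_comm]
        rw [hS, ← Finset.sum_neg_distrib]
        refine Finset.sum_congr rfl fun x hx => ?_
        rw [← Finset.sum_neg_distrib]
        refine Finset.sum_congr rfl fun y hy => ?_
        rw [hssymm x y]; ring
      linarith
    have expand : ∑ x ∈ T, ∑ y ∈ T, (b y x - b x y) * r x y = 0 := by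
      have : ∑ x ∈ T, ∑ y ∈ T, (b y x - b x y) * r x y
          = (∑ x ∈ T, ∑ y ∈ T, (b y x - b x y) * (f x * (starRingEnd ℂ) (f x)).re)
            - ∑ x ∈ T, ∑ y ∈ T, (b y x - b x y) * (f y * (starRingEnd ℂ) (f x)).re := by
        rw [← Finset.sum_sub_distrib]
        refine Finset.sum_congr rfl fun x hx => ?_
        rw [← Finset.sum_sub_distrib]
        refine Finset.sum_congr rfl fun y hy => ?_
        rw [hrexp x y]; ring
      rw [this, e1, e2, sub_zero]
    have : ∑ x ∈ T, ∑ y ∈ T, (b y x * r x y - b x y * r x y) = 0 := by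
      rw [← expand]
      refine Finset.sum_congr rfl fun x hx => Finset.sum_congr rfl fun y hy => by ring
    simp only [Finset.sum_sub_distrib] at this
    linarith [this]
  rw [hsplit, hsym]; ring

lemma bdry_sum' {V : Type*} [DecidableEq V] (b : V → V → ℝ) (U T : Finset V) (hUT : U ⊆ T)
    (hnbr : ∀ x ∈ U, ∀ y, (b x y ≠ 0 ∨ b y x ≠ 0) → y ∈ T) :
    ∑ x ∈ T, ∑ y ∈ T, b x y * (if (x ∈ U) = (y ∈ U) then 0 else 1) = bdryWeight b U := by
  have hrhs : bdryWeight b U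
      = ∑ x ∈ U, ∑ y ∈ T, (if y ∈ U then 0 else b x y + b y x) := by
    refine Finset.sum_congr rfl fun x hx => ?_
    refine finsum_to_sum' _ T fun y hy => ?_
    by_cases hyU : y ∈ U
    · exact hUT hyU
    · simp only [hyU, if_false] at hy
      refine hnbr x hx y ?_
      by_contra hcon
      push_neg at hcon
      simp [hcon.1, hcon.2] at hy
  have hlhs : ∑ x ∈ T, ∑ y ∈ T, b x y * (if (x ∈ U) = (y ∈ U) then 0 else 1)
      = (∑ x ∈ T, ∑ y ∈ T, (if x ∈ U then (if y ∈ U then 0 else b x y) else 0))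
        + ∑ x ∈ T, ∑ y ∈ T, (if x ∈ U then 0 else (if y ∈ U then b x y else 0)) := by
    rw [← Finset.sum_add_distrib]
    refine Finset.sum_congr rfl fun x hx => ?_
    rw [← Finset.sum_add_distrib]
    refine Finset.sum_congr rfl fun y hy => ?_
    by_cases h1 : x ∈ U <;> by_cases h2 : y ∈ U <;> simp [h1, h2]
  have hswap : ∑ x ∈ T, ∑ y ∈ T, (if x ∈ U then 0 else (if y ∈ U then b x y else 0))
      = ∑ x ∈ T, ∑ y ∈ T, (if x ∈ U then (if y ∈ U then 0 else b y x) else 0) := by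
    rw [Finset.sum_comm]
    refine Finset.sum_congr rfl fun x hx => ?_
    refine Finset.sum_congr rfl fun y hy => ?_
    by_cases h1 : x ∈ U <;> by_cases h2 : y ∈ U <;> simp [h1, h2]
  rw [hlhs, hswap, ← Finset.sum_add_distrib, hrhs]
  rw [← Finset.sum_subset hUT (fun x hxT hxU => ?_)]
  · refine Finset.sum_congr rfl fun x hx => ?_
    rw [← Finset.sum_add_distrib]
    refine Finset.sum_congr rfl fun y hy => ?_
    by_cases h2 : y ∈ U <;> simp [hx, h2]
  · rw [← Finset.sum_add_distrib]
    refine Finset.sum_eq_zero fun y hy => ?_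
    simp [hxU]

lemma coarea' {V : Type*} [DecidableEq V] (b : V → V → ℝ) (m : V → ℝ) (Ω : Set V)
    (hb_nonneg : ∀ x y, 0 ≤ b x y) (hm_pos : ∀ x, 0 < m x) (T : Finset V)
    (g : V → ℝ) (hg0 : ∀ x, 0 ≤ g x) (hgT : ∀ x, g x ≠ 0 → x ∈ T ∧ x ∈ Ω)
    (hnbr : ∀ x, g x ≠ 0 → ∀ y, (b x y ≠ 0 ∨ b y x ≠ 0) → y ∈ T) :
    cheeger b m Ω * ∑ x ∈ T, m x * g x ≤ ∑ x ∈ T, ∑ y ∈ T, b x y * |g x - g y| := by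
  classical
  have hch0 : 0 ≤ cheeger b m Ω := by
    apply Real.sInf_nonneg
    rintro r ⟨U, hUne, hUΩ, rfl⟩
    apply div_nonneg
    · refine Finset.sum_nonneg fun x hx => finsum_nonneg fun y => ?_
      by_cases h : y ∈ U
      · simp [h]
      · simp only [h, if_false]
        exact add_nonneg (hb_nonneg _ _) (hb_nonneg _ _)
    · exact Finset.sum_nonneg fun x hx => (hm_pos x).le
  -- strong induction on the number of points where g ≠ 0
  generalize hn : (T.filter fun x => g x ≠ 0).card = n
  induction n using Nat.strong_induction_on generalizing g with
  | _ n ih =>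
  set U := T.filter fun x => g x ≠ 0 with hU
  rcases Finset.eq_empty_or_nonempty U with hUe | hUne
  · have hzero : ∀ x ∈ T, g x = 0 := by
      intro x hx
      by_contra hgx
      have : x ∈ U := Finset.mem_filter.mpr ⟨hx, hgx⟩
      simp [hUe] at this
    have h1 : ∑ x ∈ T, m x * g x = 0 :=
      Finset.sum_eq_zero fun x hx => by rw [hzero x hx, mul_zero]
    have h2 : (0:ℝ) ≤ ∑ x ∈ T, ∑ y ∈ T, b x y * |g x - g y| :=
      Finset.sum_nonneg fun x hx => Finset.sum_nonneg fun y hy =>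
        mul_nonneg (hb_nonneg x y) (abs_nonneg _)
    rw [h1, mul_zero]; exact h2
  · -- positive minimum value t on U
    obtain ⟨x₀, hx₀U, hx₀min⟩ := U.exists_min_image g hUne
    set t := g x₀ with ht
    have hx₀ : g x₀ ≠ 0 := (Finset.mem_filter.mp hx₀U).2
    have htpos : 0 < t := lt_of_le_of_ne (hg0 x₀) (Ne.symm hx₀)
    have hUg : ∀ x, g x ≠ 0 → x ∈ U := fun x hx => Finset.mem_filter.mpr ⟨(hgT x hx).1, hx⟩
    have htle : ∀ x, g x ≠ 0 → t ≤ g x := fun x hx => hx₀min x (hUg x hx)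
    set g' : V → ℝ := fun x => max (g x - t) 0 with hg'
    have hg'0 : ∀ x, 0 ≤ g' x := fun x => le_max_right _ _
    have hg'supp : ∀ x, g' x ≠ 0 → g x ≠ 0 := by
      intro x hx
      by_contra h
      simp [hg', h, htpos.le] at hx
    have hg'T : ∀ x, g' x ≠ 0 → x ∈ T ∧ x ∈ Ω := fun x hx => hgT x (hg'supp x hx)
    have hnbr' : ∀ x, g' x ≠ 0 → ∀ y, (b x y ≠ 0 ∨ b y x ≠ 0) → y ∈ T :=
      fun x hx => hnbr x (hg'supp x hx)
    have hg'x₀ : g' x₀ = 0 := by simp [hg', ht]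
    have hcard : (T.filter fun x => g' x ≠ 0).card < n := by
      rw [← hn]
      apply Finset.card_lt_card
      constructor
      · intro x hx
        have := Finset.mem_filter.mp hx
        exact Finset.mem_filter.mpr ⟨this.1, hg'supp x this.2⟩
      · intro hsub
        have : x₀ ∈ T.filter fun x => g' x ≠ 0 := hsub hx₀U
        have := (Finset.mem_filter.mp this).2
        exact this hg'x₀
    have IH := ih _ hcard g' hg'0 hg'T hnbr' rfl
    -- pointwise decomposition of |g x - g y|
    have hpt : ∀ x ∈ T, ∀ y ∈ T, |g x - g y|
        = |g' x - g' y| + t * (if (x ∈ U) = (y ∈ U) then 0 else 1) := by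
      intro x hx y hy
      have hxiff : (x ∈ U) ↔ g x ≠ 0 := ⟨fun h => (Finset.mem_filter.mp h).2, fun h => hUg x h⟩
      have hyiff : (y ∈ U) ↔ g y ≠ 0 := ⟨fun h => (Finset.mem_filter.mp h).2, fun h => hUg y h⟩
      by_cases h1 : g x ≠ 0 <;> by_cases h2 : g y ≠ 0
      · have e1 : g' x = g x - t := by simp [hg', max_eq_left, sub_nonneg.mpr (htle x h1)]
        have e2 : g' y = g y - t := by simp [hg', max_eq_left, sub_nonneg.mpr (htle y h2)]
        have hc : (x ∈ U) = (y ∈ U) := by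
          rw [eq_iff_iff, hxiff, hyiff]
          exact iff_of_true h1 h2
        rw [if_pos hc, e1, e2, mul_zero, add_zero]
        congr 1; ring
      · push_neg at h2
        have e1 : g' x = g x - t := by simp [hg', max_eq_left, sub_nonneg.mpr (htle x h1)]
        have e2 : g' y = 0 := by simp [hg', h2, htpos.le]
        have h1' := htle x h1
        have hc : ¬ ((x ∈ U) = (y ∈ U)) := by
          intro h
          rw [eq_iff_iff] at h
          exact (hyiff.mp (h.mp (hxiff.mpr h1))) h2
        rw [if_neg hc, e1, e2, h2, mul_one, sub_zero, sub_zero,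
          _root_.abs_of_nonneg (by linarith : (0:ℝ) ≤ g x - t),
          _root_.abs_of_nonneg (hg0 x)]
        ring
      · push_neg at h1
        have e1 : g' x = 0 := by simp [hg', h1, htpos.le]
        have e2 : g' y = g y - t := by simp [hg', max_eq_left, sub_nonneg.mpr (htle y h2)]
        have h2' := htle y h2
        have hc : ¬ ((x ∈ U) = (y ∈ U)) := by
          intro h
          rw [eq_iff_iff] at h
          exact (hxiff.mp (h.mpr (hyiff.mpr h2))) h1
        rw [if_neg hc, e1, e2, h1, mul_one, zero_sub, zero_sub,
          abs_neg, abs_neg, _root_.abs_of_nonneg (by linarith : (0:ℝ) ≤ g y - t),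
          _root_.abs_of_nonneg (hg0 y)]
        ring
      · push_neg at h1; push_neg at h2
        have e1 : g' x = 0 := by simp [hg', h1, htpos.le]
        have e2 : g' y = 0 := by simp [hg', h2, htpos.le]
        have hc : (x ∈ U) = (y ∈ U) := by
          rw [eq_iff_iff, hxiff, hyiff]
          simp [h1, h2]
        rw [if_pos hc, e1, e2, h1, h2, mul_zero]
        simp
    -- sum decomposition
    have hsum : ∑ x ∈ T, ∑ y ∈ T, b x y * |g x - g y|
        = (∑ x ∈ T, ∑ y ∈ T, b x y * |g' x - g' y|) + t * bdryWeight b U := by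
      have hbd := bdry_sum' b U T (Finset.filter_subset _ _)
        (fun x hx => hnbr x (Finset.mem_filter.mp hx).2)
      rw [← hbd, Finset.mul_sum]
      rw [← Finset.sum_add_distrib]
      refine Finset.sum_congr rfl fun x hx => ?_
      rw [Finset.mul_sum, ← Finset.sum_add_distrib]
      refine Finset.sum_congr rfl fun y hy => ?_
      rw [hpt x hx y hy]; ring
    -- m-sum decomposition
    have hmsum : ∑ x ∈ T, m x * g x
        = (∑ x ∈ T, m x * g' x) + t * ∑ x ∈ U, m x := by
      rw [hU, Finset.sum_filter, Finset.mul_sum, ← Finset.sum_add_distrib]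
      refine Finset.sum_congr rfl fun x hx => ?_
      by_cases h1 : g x ≠ 0
      · have e1 : g' x = g x - t := by simp [hg', max_eq_left, sub_nonneg.mpr (htle x h1)]
        rw [if_pos h1, e1]; ring
      · push_neg at h1
        have e1 : g' x = 0 := by simp [hg', h1, htpos.le]
        rw [if_neg (by simp [h1]), e1]
        simp [h1]
    -- cheeger bound: cheeger * m(U) ≤ bdryWeight U
    have hUΩ : ↑U ⊆ Ω := fun x hx => (hgT x (Finset.mem_filter.mp hx).2).2
    have hmU : 0 < ∑ x ∈ U, m x := Finset.sum_pos (fun x _ => hm_pos x) hUne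
    have hbdd : BddBelow {r : ℝ | ∃ U : Finset V, U.Nonempty ∧ ↑U ⊆ Ω ∧
        r = bdryWeight b U / ∑ x ∈ U, m x} := by
      refine ⟨0, ?_⟩
      rintro r ⟨W, hWne, hWΩ, rfl⟩
      apply div_nonneg
      · refine Finset.sum_nonneg fun x hx => finsum_nonneg fun y => ?_
        by_cases h : y ∈ W
        · simp [h]
        · simp only [h, if_false]
          exact add_nonneg (hb_nonneg _ _) (hb_nonneg _ _)
      · exact Finset.sum_nonneg fun x hx => (hm_pos x).le
    have hchle : cheeger b m Ω ≤ bdryWeight b U / ∑ x ∈ U, m x :=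
      csInf_le hbdd ⟨U, hUne, hUΩ, rfl⟩
    have hch : cheeger b m Ω * ∑ x ∈ U, m x ≤ bdryWeight b U := by
      rw [← le_div_iff₀ hmU]; exact hchle
    calc cheeger b m Ω * ∑ x ∈ T, m x * g x
        = cheeger b m Ω * ∑ x ∈ T, m x * g' x
          + t * (cheeger b m Ω * ∑ x ∈ U, m x) := by rw [hmsum]; ring
      _ ≤ (∑ x ∈ T, ∑ y ∈ T, b x y * |g' x - g' y|) + t * bdryWeight b U := by
          refine add_le_add IH ?_
          exact mul_le_mul_of_nonneg_left hch htpos.le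
      _ = ∑ x ∈ T, ∑ y ∈ T, b x y * |g x - g y| := hsum.symm

/-- The normalized indicator of a finite nonempty set gives a test function for `nuD`. -/
lemma indicator_element' (b : V → V → ℝ) (m : V → ℝ) (Ω : Set V)
    (hloc_fin : ∀ x, {y | b x y ≠ 0 ∨ b y x ≠ 0}.Finite)
    (hm_pos : ∀ x, 0 < m x)
    (hβ : ∀ x, betaPlus b x = betaMinus b x)
    (U : Finset V) (hUne : U.Nonempty) (hUΩ : ↑U ⊆ Ω) :
    ∃ f : V → ℂ, (support f).Finite ∧ support f ⊆ Ω ∧ innerW m f f = 1 ∧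
      (innerW m (lap b m f) f).re = bdryWeight b U / (2 * ∑ x ∈ U, m x) := by
  classical
  set mU : ℝ := ∑ x ∈ U, m x with hmUdef
  have hmU : 0 < mU := Finset.sum_pos (fun x _ => hm_pos x) hUne
  set c : ℝ := (Real.sqrt mU)⁻¹ with hc
  have hsq : Real.sqrt mU > 0 := Real.sqrt_pos.mpr hmU
  have hcpos : 0 < c := inv_pos.mpr hsq
  have hc2 : c^2 * mU = 1 := by
    rw [hc]
    rw [← Real.sqrt_inv]
    rw [Real.sq_sqrt (by positivity)]
    field_simp
  set f : V → ℂ := fun x => (c : ℂ) * (if x ∈ U then 1 else 0) with hf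
  have hfval : ∀ x, f x = if x ∈ U then (c:ℂ) else 0 := by
    intro x; rw [hf]; by_cases h : x ∈ U <;> simp [h]
  have hcne : (c : ℂ) ≠ 0 := Complex.ofReal_ne_zero.mpr hcpos.ne'
  have hsupp : ∀ x, f x ≠ 0 → x ∈ U := by
    intro x hx
    by_contra h
    rw [hfval x, if_neg h] at hx
    exact hx rfl
  have hsuppset : support f ⊆ ↑U := fun x hx => hsupp x hx
  refine ⟨f, Set.Finite.subset U.finite_toSet hsuppset, hsuppset.trans hUΩ, ?_, ?_⟩
  · rw [innerW, finsum_to_sum' _ U (fun x hx => hsupp x (by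
      intro h; rw [h] at hx; simp at hx))]
    have : ∀ x ∈ U, (m x : ℂ) * f x * (starRingEnd ℂ) (f x) = ((m x * c^2 : ℝ) : ℂ) := by
      intro x hx
      rw [hfval x, if_pos hx]
      rw [Complex.conj_ofReal]
      push_cast
      ring
    rw [Finset.sum_congr rfl this, ← Complex.ofReal_sum]
    rw [← Finset.sum_mul]
    norm_cast
    rw [← hmUdef]
    rw [mul_comm, hc2]
  · set T : Finset V := U ∪ U.biUnion (fun x => (hloc_fin x).toFinset) with hT
    have hUT : U ⊆ T := Finset.subset_union_left
    have hnbrU : ∀ x ∈ U, ∀ y, (b x y ≠ 0 ∨ b y x ≠ 0) → y ∈ T := by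
      intro x hx y hy
      refine Finset.mem_union_right _ (Finset.mem_biUnion.mpr ⟨x, hx, ?_⟩)
      exact (hloc_fin x).mem_toFinset.mpr hy
    have hnbr : ∀ x, f x ≠ 0 → ∀ y, (b x y ≠ 0 ∨ b y x ≠ 0) → y ∈ T :=
      fun x hx => hnbrU x (hsupp x hx)
    have hβT : ∀ x, f x ≠ 0 → (∑ y ∈ T, b x y) = ∑ y ∈ T, b y x := by
      intro x hx
      have h1 : betaPlus b x = ∑ y ∈ T, b x y :=
        finsum_to_sum' _ T (fun y hy => hnbr x hx y (Or.inl hy))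
      have h2 : betaMinus b x = ∑ y ∈ T, b y x :=
        finsum_to_sum' _ T (fun y hy => hnbr x hx y (Or.inr hy))
      rw [← h1, ← h2, hβ]
    rw [green' b m f T (fun x => (hm_pos x).ne') hnbr hβT (fun x hx => hUT (hsupp x hx))]
    have hptw : ∀ x ∈ T, ∀ y ∈ T, b x y * ‖f x - f y‖^2
        = c^2 * (b x y * (if (x ∈ U) = (y ∈ U) then 0 else 1)) := by
      intro x hx y hy
      rw [hfval x, hfval y]
      by_cases h1 : x ∈ U <;> by_cases h2 : y ∈ U
      · rw [if_pos h1, if_pos h2, if_pos (by rw [eq_iff_iff]; exact iff_of_true h1 h2)]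
        simp
      · rw [if_pos h1, if_neg h2,
          if_neg (by rw [eq_iff_iff]; exact fun h => h2 (h.mp h1))]
        rw [sub_zero, Complex.norm_real, Real.norm_eq_abs, _root_.sq_abs]
        ring
      · rw [if_neg h1, if_pos h2,
          if_neg (by rw [eq_iff_iff]; exact fun h => h1 (h.mpr h2))]
        rw [zero_sub, norm_neg, Complex.norm_real, Real.norm_eq_abs, _root_.sq_abs]
        ring
      · rw [if_neg h1, if_neg h2, if_pos (by rw [eq_iff_iff]; exact iff_of_false h1 h2)]
        simp
    have : ∑ x ∈ T, ∑ y ∈ T, b x y * ‖f x - f y‖^2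
        = c^2 * ∑ x ∈ T, ∑ y ∈ T, b x y * (if (x ∈ U) = (y ∈ U) then 0 else 1) := by
      rw [Finset.mul_sum]
      refine Finset.sum_congr rfl fun x hx => ?_
      rw [Finset.mul_sum]
      exact Finset.sum_congr rfl fun y hy => hptw x hx y hy
    rw [this, bdry_sum' b U T hUT hnbrU]
    rw [eq_div_iff (by positivity)]
    have : 1/2 * (c^2 * bdryWeight b U) * (2 * mU) = (c^2 * mU) * bdryWeight b U := by ring
    rw [this, hc2, one_mul]


lemma energy_nonneg' (b : V → V → ℝ) (m : V → ℝ)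
    (hb_nonneg : ∀ x y, 0 ≤ b x y)
    (hloc_fin : ∀ x, {y | b x y ≠ 0 ∨ b y x ≠ 0}.Finite)
    (hm_pos : ∀ x, 0 < m x)
    (hβ : ∀ x, betaPlus b x = betaMinus b x)
    (f : V → ℂ) (hfin : (support f).Finite) :
    0 ≤ (innerW m (lap b m f) f).re := by
  classical
  set A : Finset V := hfin.toFinset with hA
  set T : Finset V := A ∪ A.biUnion (fun x => (hloc_fin x).toFinset) with hT
  have hsuppA : ∀ x, f x ≠ 0 → x ∈ A := fun x hx => hfin.mem_toFinset.mpr hx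
  have hnbr : ∀ x, f x ≠ 0 → ∀ y, (b x y ≠ 0 ∨ b y x ≠ 0) → y ∈ T := by
    intro x hx y hy
    exact Finset.mem_union_right _ (Finset.mem_biUnion.mpr
      ⟨x, hsuppA x hx, (hloc_fin x).mem_toFinset.mpr hy⟩)
  have hβT : ∀ x, f x ≠ 0 → (∑ y ∈ T, b x y) = ∑ y ∈ T, b y x := by
    intro x hx
    have h1 : betaPlus b x = ∑ y ∈ T, b x y :=
      finsum_to_sum' _ T (fun y hy => hnbr x hx y (Or.inl hy))
    have h2 : betaMinus b x = ∑ y ∈ T, b y x :=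
      finsum_to_sum' _ T (fun y hy => hnbr x hx y (Or.inr hy))
    rw [← h1, ← h2, hβ]
  rw [green' b m f T (fun x => (hm_pos x).ne') hnbr hβT
    (fun x hx => Finset.mem_union_left _ (hsuppA x hx))]
  have : (0:ℝ) ≤ ∑ x ∈ T, ∑ y ∈ T, b x y * ‖f x - f y‖^2 :=
    Finset.sum_nonneg fun x _ => Finset.sum_nonneg fun y _ =>
      mul_nonneg (hb_nonneg x y) (by positivity)
  linarith

lemma per_f' (b : V → V → ℝ) (m : V → ℝ) (Ω : Set V)
    (hb_nonneg : ∀ x y, 0 ≤ b x y)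
    (hloc_fin : ∀ x, {y | b x y ≠ 0 ∨ b y x ≠ 0}.Finite)
    (hm_pos : ∀ x, 0 < m x)
    (hβ : ∀ x, betaPlus b x = betaMinus b x)
    (M : ℝ) (hM0 : 0 ≤ M) (hMb : ∀ x ∈ Ω, betaPlus b x ≤ M * m x)
    (f : V → ℂ) (hfin : (support f).Finite) (hΩs : support f ⊆ Ω)
    (hnorm : innerW m f f = 1) :
    cheeger b m Ω ^ 2 ≤ 8 * (M * (innerW m (lap b m f) f).re) := by
  classical
  set A : Finset V := hfin.toFinset with hA
  set T : Finset V := A ∪ A.biUnion (fun x => (hloc_fin x).toFinset) with hT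
  have hsuppA : ∀ x, f x ≠ 0 → x ∈ A := fun x hx => hfin.mem_toFinset.mpr hx
  have hsuppT : ∀ x, f x ≠ 0 → x ∈ T := fun x hx =>
    Finset.mem_union_left _ (hsuppA x hx)
  have hΩ' : ∀ x, f x ≠ 0 → x ∈ Ω := fun x hx => hΩs hx
  have hnbr : ∀ x, f x ≠ 0 → ∀ y, (b x y ≠ 0 ∨ b y x ≠ 0) → y ∈ T := by
    intro x hx y hy
    exact Finset.mem_union_right _ (Finset.mem_biUnion.mpr
      ⟨x, hsuppA x hx, (hloc_fin x).mem_toFinset.mpr hy⟩)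
  have hβplus : ∀ x, f x ≠ 0 → betaPlus b x = ∑ y ∈ T, b x y := fun x hx =>
    finsum_to_sum' _ T (fun y hy => hnbr x hx y (Or.inl hy))
  have hβminus : ∀ x, f x ≠ 0 → betaMinus b x = ∑ y ∈ T, b y x := fun x hx =>
    finsum_to_sum' _ T (fun y hy => hnbr x hx y (Or.inr hy))
  have hβT : ∀ x, f x ≠ 0 → (∑ y ∈ T, b x y) = ∑ y ∈ T, b y x := by
    intro x hx; rw [← hβplus x hx, ← hβminus x hx, hβ]
  set Q : ℝ := (innerW m (lap b m f) f).re with hQ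
  have hgreen : Q = (1/2) * ∑ x ∈ T, ∑ y ∈ T, b x y * ‖f x - f y‖ ^ 2 :=
    green' b m f T (fun x => (hm_pos x).ne') hnbr hβT hsuppT
  set g : V → ℝ := fun x => ‖f x‖^2 with hg
  have hgf : ∀ x, g x ≠ 0 → f x ≠ 0 := by
    intro x hx
    by_contra h
    rw [hg] at hx; simp [h] at hx
  have hg0 : ∀ x, 0 ≤ g x := fun x => by positivity
  -- norm condition as a real sum
  have hnorm1 : ∑ x ∈ T, m x * g x = 1 := by
    have h1 : innerW m f f = ∑ x ∈ T, (m x : ℂ) * f x * (starRingEnd ℂ) (f x) := by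
      rw [innerW]
      refine finsum_to_sum' _ T fun x hx => ?_
      refine hsuppT x fun h => ?_
      rw [h] at hx; simp at hx
    have h2 : (innerW m f f).re = ∑ x ∈ T, m x * g x := by
      rw [h1, Complex.re_sum]
      refine Finset.sum_congr rfl fun x hx => ?_
      rw [mul_assoc, re_ofReal_mul, Complex.mul_conj, Complex.ofReal_re]
      simp only [hg]
      rw [Complex.normSq_eq_norm_sq]
    rw [← h2, hnorm]
    simp
  have hcoarea := coarea' b m Ω hb_nonneg hm_pos T g hg0
    (fun x hx => ⟨hsuppT x (hgf x hx), hΩ' x (hgf x hx)⟩)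
    (fun x hx => hnbr x (hgf x hx))
  rw [hnorm1, mul_one] at hcoarea
  -- Cauchy-Schwarz
  set F : V × V → ℝ := fun p => Real.sqrt (b p.1 p.2) * (‖f p.1‖ + ‖f p.2‖) with hF
  set G : V × V → ℝ := fun p => Real.sqrt (b p.1 p.2) * |‖f p.1‖ - ‖f p.2‖| with hG
  have hCS := Finset.sum_mul_sq_le_sq_mul_sq (T ×ˢ T) F G
  have hSprod : ∑ p ∈ T ×ˢ T, F p * G p = ∑ x ∈ T, ∑ y ∈ T, b x y * |g x - g y| := by
    rw [Finset.sum_product]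
    refine Finset.sum_congr rfl fun x hx => Finset.sum_congr rfl fun y hy => ?_
    rw [hF, hG, hg]
    have hb := hb_nonneg x y
    have : Real.sqrt (b x y) * (‖f x‖ + ‖f y‖) * (Real.sqrt (b x y) * |‖f x‖ - ‖f y‖|)
        = b x y * ((‖f x‖ + ‖f y‖) * |‖f x‖ - ‖f y‖|) := by
      rw [show Real.sqrt (b x y) * (‖f x‖ + ‖f y‖) * (Real.sqrt (b x y) * |‖f x‖ - ‖f y‖|)
        = (Real.sqrt (b x y) * Real.sqrt (b x y)) * ((‖f x‖ + ‖f y‖) * |‖f x‖ - ‖f y‖|)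
        from by ring, Real.mul_self_sqrt hb]
    rw [this]
    congr 1
    rw [← _root_.abs_of_nonneg (by positivity : (0:ℝ) ≤ ‖f x‖ + ‖f y‖), ← abs_mul]
    congr 1
    ring
  have hX : ∑ p ∈ T ×ˢ T, F p ^ 2 ≤ 4 * M := by
    have hXval : ∑ p ∈ T ×ˢ T, F p ^ 2
        = ∑ x ∈ T, ∑ y ∈ T, b x y * (‖f x‖ + ‖f y‖)^2 := by
      rw [Finset.sum_product]
      refine Finset.sum_congr rfl fun x hx => Finset.sum_congr rfl fun y hy => ?_
      rw [hF, mul_pow, Real.sq_sqrt (hb_nonneg x y)]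
    have hpt : ∀ x ∈ T, ∀ y ∈ T, b x y * (‖f x‖ + ‖f y‖)^2
        ≤ 2 * (b x y * g x) + 2 * (b x y * g y) := by
      intro x hx y hy
      have h1 : (‖f x‖ + ‖f y‖)^2 ≤ 2 * g x + 2 * g y := by
        simp only [hg]
        nlinarith [sq_nonneg (‖f x‖ - ‖f y‖)]
      nlinarith [hb_nonneg x y, hg0 x, hg0 y]
    have hbound1 : ∑ x ∈ T, ∑ y ∈ T, b x y * g x ≤ M := by
      have h1 : ∀ x ∈ T, ∑ y ∈ T, b x y * g x ≤ M * (m x * g x) := by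
        intro x hx
        rw [← Finset.sum_mul]
        by_cases hfx : f x = 0
        · simp [hg, hfx]
        · rw [← hβplus x hfx]
          rw [show M * (m x * g x) = (M * m x) * g x from by ring]
          exact mul_le_mul_of_nonneg_right (hMb x (hΩ' x hfx)) (hg0 x)
      calc ∑ x ∈ T, ∑ y ∈ T, b x y * g x ≤ ∑ x ∈ T, M * (m x * g x) :=
            Finset.sum_le_sum h1
        _ = M * ∑ x ∈ T, m x * g x := by rw [Finset.mul_sum]
        _ = M := by rw [hnorm1, mul_one]
    have hbound2 : ∑ x ∈ T, ∑ y ∈ T, b x y * g y ≤ M := by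
      rw [Finset.sum_comm]
      have h1 : ∀ y ∈ T, ∑ x ∈ T, b x y * g y ≤ M * (m y * g y) := by
        intro y hy
        rw [← Finset.sum_mul]
        by_cases hfy : f y = 0
        · simp [hg, hfy]
        · rw [← hβminus y hfy, ← hβ y]
          rw [show M * (m y * g y) = (M * m y) * g y from by ring]
          exact mul_le_mul_of_nonneg_right (hMb y (hΩ' y hfy)) (hg0 y)
      calc ∑ y ∈ T, ∑ x ∈ T, b x y * g y ≤ ∑ y ∈ T, M * (m y * g y) :=
            Finset.sum_le_sum h1
        _ = M * ∑ y ∈ T, m y * g y := by rw [Finset.mul_sum]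
        _ = M := by rw [hnorm1, mul_one]
    have hsplit : ∑ x ∈ T, ∑ y ∈ T, (2 * (b x y * g x) + 2 * (b x y * g y))
        = 2 * (∑ x ∈ T, ∑ y ∈ T, b x y * g x) + 2 * (∑ x ∈ T, ∑ y ∈ T, b x y * g y) := by
      rw [Finset.mul_sum, Finset.mul_sum, ← Finset.sum_add_distrib]
      refine Finset.sum_congr rfl fun x hx => ?_
      rw [Finset.mul_sum, Finset.mul_sum, ← Finset.sum_add_distrib]
    calc ∑ p ∈ T ×ˢ T, F p ^ 2 = ∑ x ∈ T, ∑ y ∈ T, b x y * (‖f x‖ + ‖f y‖)^2 := hXval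
      _ ≤ ∑ x ∈ T, ∑ y ∈ T, (2 * (b x y * g x) + 2 * (b x y * g y)) := by
          refine Finset.sum_le_sum fun x hx => Finset.sum_le_sum fun y hy => hpt x hx y hy
      _ = 2 * (∑ x ∈ T, ∑ y ∈ T, b x y * g x) + 2 * (∑ x ∈ T, ∑ y ∈ T, b x y * g y) := hsplit
      _ ≤ 2 * M + 2 * M := by
          have h2 : (0:ℝ) ≤ 2 := by norm_num
          exact add_le_add (mul_le_mul_of_nonneg_left hbound1 h2)
            (mul_le_mul_of_nonneg_left hbound2 h2)
      _ = 4 * M := by ring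
  have hY : ∑ p ∈ T ×ˢ T, G p ^ 2 ≤ 2 * Q := by
    have hYval : ∑ p ∈ T ×ˢ T, G p ^ 2
        = ∑ x ∈ T, ∑ y ∈ T, b x y * |‖f x‖ - ‖f y‖|^2 := by
      rw [Finset.sum_product]
      refine Finset.sum_congr rfl fun x hx => Finset.sum_congr rfl fun y hy => ?_
      rw [hG, mul_pow, Real.sq_sqrt (hb_nonneg x y)]
    rw [hYval, hgreen]
    have : ∑ x ∈ T, ∑ y ∈ T, b x y * |‖f x‖ - ‖f y‖|^2
        ≤ ∑ x ∈ T, ∑ y ∈ T, b x y * ‖f x - f y‖^2 := by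
      refine Finset.sum_le_sum fun x hx => Finset.sum_le_sum fun y hy => ?_
      refine mul_le_mul_of_nonneg_left ?_ (hb_nonneg x y)
      exact pow_le_pow_left₀ (abs_nonneg _) (abs_norm_sub_norm_le (f x) (f y)) 2
    linarith
  have hS0 : (0:ℝ) ≤ ∑ x ∈ T, ∑ y ∈ T, b x y * |g x - g y| :=
    Finset.sum_nonneg fun x _ => Finset.sum_nonneg fun y _ =>
      mul_nonneg (hb_nonneg x y) (abs_nonneg _)
  have hch0 : 0 ≤ cheeger b m Ω := by
    apply Real.sInf_nonneg
    rintro r ⟨U, hUne, hUΩ, rfl⟩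
    apply div_nonneg
    · refine Finset.sum_nonneg fun x hx => finsum_nonneg fun y => ?_
      by_cases h : y ∈ U
      · simp [h]
      · simp only [h, if_false]
        exact add_nonneg (hb_nonneg _ _) (hb_nonneg _ _)
    · exact Finset.sum_nonneg fun x hx => (hm_pos x).le
  have hY0 : (0:ℝ) ≤ ∑ p ∈ T ×ˢ T, G p ^ 2 :=
    Finset.sum_nonneg fun p _ => sq_nonneg _
  have hM4 : (0:ℝ) ≤ 4 * M := by linarith
  have hfinal : (∑ x ∈ T, ∑ y ∈ T, b x y * |g x - g y|)^2 ≤ (4 * M) * (2 * Q) := by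
    rw [← hSprod]
    calc (∑ p ∈ T ×ˢ T, F p * G p)^2
        ≤ (∑ p ∈ T ×ˢ T, F p ^ 2) * ∑ p ∈ T ×ˢ T, G p ^ 2 := hCS
      _ ≤ (4 * M) * (2 * Q) := mul_le_mul hX hY hY0 hM4
  have hch2 : cheeger b m Ω ^ 2 ≤ (∑ x ∈ T, ∑ y ∈ T, b x y * |g x - g y|)^2 :=
    pow_le_pow_left₀ hch0 hcoarea 2
  calc cheeger b m Ω ^ 2 ≤ (4 * M) * (2 * Q) := le_trans hch2 hfinal
    _ = 8 * (M * Q) := by ring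


end cheegerAux

/-- Cheeger inequality: assume Assumption (β), let `Ω ⊆ V` be nonempty and
suppose `M_Ω = sup { β⁺(x)/m(x) : x ∈ Ω } < ∞`. Then
`h(Ω)²/8 ≤ M_Ω ν(Δ^D_Ω) ≤ (1/2) M_Ω h(Ω)`. -/
theorem cheeger_inequality
    (V : Type*) [Countable V] [DecidableEq V] (b : V → V → ℝ) (m : V → ℝ)
    (hb_nonneg : ∀ x y, 0 ≤ b x y)
    (hb_loop : ∀ x, b x x = 0)
    (hloc_fin : ∀ x, {y | b x y ≠ 0 ∨ b y x ≠ 0}.Finite)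
    (hm_pos : ∀ x, 0 < m x)
    (hβp_pos : ∀ x, 0 < betaPlus b x)
    (hβm_pos : ∀ x, 0 < betaMinus b x)
    (hβ : ∀ x, betaPlus b x = betaMinus b x)
    (Ω : Set V) (hΩ : Ω.Nonempty)
    (hM : BddAbove {r : ℝ | ∃ x ∈ Ω, r = betaPlus b x / m x}) :
    (cheeger b m Ω) ^ 2 / 8
        ≤ sSup {r : ℝ | ∃ x ∈ Ω, r = betaPlus b x / m x} * nuD b m Ω ∧
    sSup {r : ℝ | ∃ x ∈ Ω, r = betaPlus b x / m x} * nuD b m Ω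
        ≤ sSup {r : ℝ | ∃ x ∈ Ω, r = betaPlus b x / m x} * cheeger b m Ω / 2 := by
  classical
  obtain ⟨x₀, hx₀⟩ := hΩ
  set M : ℝ := sSup {r : ℝ | ∃ x ∈ Ω, r = betaPlus b x / m x} with hMdef
  have hM0 : 0 < M := by
    have h1 : betaPlus b x₀ / m x₀ ≤ M := le_csSup hM ⟨x₀, hx₀, rfl⟩
    have h2 : 0 < betaPlus b x₀ / m x₀ := div_pos (hβp_pos x₀) (hm_pos x₀)
    linarith
  have hMb : ∀ x ∈ Ω, betaPlus b x ≤ M * m x := by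
    intro x hx
    have h1 : betaPlus b x / m x ≤ M := le_csSup hM ⟨x, hx, rfl⟩
    rw [div_le_iff₀ (hm_pos x)] at h1
    linarith [h1]
  -- the nuD set
  set Sν : Set ℝ := {r : ℝ | ∃ f : V → ℂ, (support f).Finite ∧ support f ⊆ Ω ∧
    innerW m f f = 1 ∧ r = (innerW m (lap b m f) f).re} with hSν
  have hSνbdd : BddBelow Sν := by
    refine ⟨0, ?_⟩
    rintro r ⟨f, hfin, hsub, hnorm, rfl⟩
    exact energy_nonneg' b m hb_nonneg hloc_fin hm_pos hβ f hfin
  have hSνne : Sν.Nonempty := by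
    obtain ⟨f, h1, h2, h3, h4⟩ := indicator_element' b m Ω hloc_fin hm_pos hβ {x₀}
      (Finset.singleton_nonempty x₀) (by simpa using hx₀)
    exact ⟨_, f, h1, h2, h3, rfl⟩
  -- the cheeger set
  set Sc : Set ℝ := {r : ℝ | ∃ U : Finset V, U.Nonempty ∧ ↑U ⊆ Ω ∧
    r = bdryWeight b U / ∑ x ∈ U, m x} with hSc
  have hScne : Sc.Nonempty :=
    ⟨_, {x₀}, Finset.singleton_nonempty x₀, by simpa using hx₀, rfl⟩
  have hnuD : nuD b m Ω = sInf Sν := rfl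
  have hch : cheeger b m Ω = sInf Sc := rfl
  constructor
  · -- part 1
    have key : ∀ r ∈ Sν, cheeger b m Ω ^ 2 / 8 / M ≤ r := by
      rintro r ⟨f, hfin, hsub, hnorm, rfl⟩
      have := per_f' b m Ω hb_nonneg hloc_fin hm_pos hβ M hM0.le hMb f hfin hsub hnorm
      rw [div_le_iff₀ hM0, div_le_iff₀ (by norm_num : (0:ℝ) < 8)]
      linarith
    have h1 : cheeger b m Ω ^ 2 / 8 / M ≤ nuD b m Ω := by
      rw [hnuD]
      exact le_csInf hSνne key
    rw [div_le_iff₀ hM0] at h1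
    linarith [h1]
  · -- part 2
    have key : ∀ r ∈ Sc, 2 * nuD b m Ω ≤ r := by
      rintro r ⟨U, hUne, hUΩ, rfl⟩
      obtain ⟨f, h1, h2, h3, h4⟩ := indicator_element' b m Ω hloc_fin hm_pos hβ U hUne hUΩ
      have hel : (innerW m (lap b m f) f).re ∈ Sν := ⟨f, h1, h2, h3, rfl⟩
      have hle : nuD b m Ω ≤ (innerW m (lap b m f) f).re := csInf_le hSνbdd hel
      rw [h4] at hle
      have hmU : 0 < ∑ x ∈ U, m x := Finset.sum_pos (fun x _ => hm_pos x) hUne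
      have : bdryWeight b U / (2 * ∑ x ∈ U, m x) = (bdryWeight b U / ∑ x ∈ U, m x) / 2 := by
        rw [div_div]
        ring_nf
      rw [this] at hle
      linarith
    have h2 : 2 * nuD b m Ω ≤ cheeger b m Ω := by
      rw [hch]
      exact le_csInf hScne key
    have h3 : nuD b m Ω ≤ cheeger b m Ω / 2 := by linarith
    calc M * nuD b m Ω ≤ M * (cheeger b m Ω / 2) :=
          mul_le_mul_of_nonneg_left h3 hM0.le
      _ = M * cheeger b m Ω / 2 := by ring
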